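/- Let (Ω, F, P) be a probability space, B ∈ F with π₀ = P(B) ∈ (0,1), G a sub-σ-algebra of F, and X = P(B | G). If the conditional distribution of X given B equals the conditional distribution of X given Bᶜ, then X = π₀ almost surely. -/

import Mathlib

open MeasureTheory ProbabilityTheory

theorem stmt_3 {Ω : Type*} [m0 : MeasurableSpace Ω] (μ : Measure Ω) [IsProbabilityMeasure μ]
    (B : Set Ω) (hB : MeasurableSet B)
    (hB0 : 0 < (μ B).toReal) (hB1 : (μ B).toReal < 1)
    (m : MeasurableSpace Ω) (hm : m ≤ m0)
    (X : Ω → ℝ) (hX : X = MeasureTheory.condExp m μ (B.indicator fun _ => (1 : ℝ)))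
    (hdist : @Measure.map Ω ℝ m0 _ X (μ[|B]) = @Measure.map Ω ℝ m0 _ X (μ[|Bᶜ])) :
    X =ᵐ[μ] fun _ => (μ B).toReal := by
  letI : MeasurableSpace Ω := m0
  set p : ℝ := (μ B).toReal with hp
  have hind : Integrable (B.indicator fun _ => (1:ℝ)) μ :=
    (integrable_const (1:ℝ)).indicator hB
  have hXm : StronglyMeasurable[m] X := hX ▸ stronglyMeasurable_condExp
  have hXmeas : Measurable X := (hXm.mono hm).measurable
  have hXint : Integrable X μ := hX ▸ integrable_condExp
  have hX0 : 0 ≤ᵐ[μ] X := by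
    rw [hX]
    exact condExp_nonneg (Filter.Eventually.of_forall fun ω =>
      Set.indicator_nonneg (fun _ _ => zero_le_one) ω)
  have hX1 : X ≤ᵐ[μ] fun _ => (1:ℝ) := by
    rw [hX]
    calc μ[B.indicator fun _ => (1:ℝ)|m] ≤ᵐ[μ] μ[fun _ => (1:ℝ)|m] := by
          refine condExp_mono hind (integrable_const 1) ?_
          refine Filter.Eventually.of_forall fun ω => ?_
          by_cases h : ω ∈ B <;> simp [Set.indicator_of_mem, Set.indicator_of_notMem, h]
      _ =ᵐ[μ] fun _ => (1:ℝ) := by rw [condExp_const hm]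
  have hXbd : ∀ᵐ ω ∂μ, ‖X ω‖ ≤ 1 := by
    filter_upwards [hX0, hX1] with ω h0 h1
    have h0' : (0:ℝ) ≤ X ω := h0
    rw [Real.norm_eq_abs, abs_le]
    exact ⟨by linarith, h1⟩
  -- E X = p
  have hIX : ∫ ω, X ω ∂μ = p := by
    rw [hX, integral_condExp hm, integral_indicator_const (1:ℝ) hB]
    simp [hp, measureReal_def]
  -- Integrable X*X
  have hXX : Integrable (fun ω => X ω * X ω) μ :=
    hXint.bdd_mul hXmeas.aestronglyMeasurable hXbd
  -- ∫_B X = ∫ X*X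
  have hXB : ∫ ω in B, X ω ∂μ = ∫ ω, X ω * X ω ∂μ := by
    have h1 : ∫ ω in B, X ω ∂μ = ∫ ω, X ω * B.indicator (fun _ => (1:ℝ)) ω ∂μ := by
      rw [← integral_indicator hB]
      congr 1; funext ω
      by_cases h : ω ∈ B <;> simp [Set.indicator_of_mem, Set.indicator_of_notMem, h]
    have hmul : Integrable (X * B.indicator fun _ => (1:ℝ)) μ :=
      hind.bdd_mul hXmeas.aestronglyMeasurable hXbd
    have h2 : μ[X * B.indicator fun _ => (1:ℝ)|m] =ᵐ[μ]
        X * μ[B.indicator fun _ => (1:ℝ)|m] :=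
      condExp_mul_of_stronglyMeasurable_left hXm hmul hind
    have h3 : ∫ ω, (X * B.indicator fun _ => (1:ℝ)) ω ∂μ
        = ∫ ω, (X * μ[B.indicator fun _ => (1:ℝ)|m]) ω ∂μ :=
      (integral_condExp hm).symm.trans (integral_congr_ae h2)
    rw [h1]
    calc ∫ ω, X ω * B.indicator (fun _ => (1:ℝ)) ω ∂μ
        = ∫ ω, (X * μ[B.indicator fun _ => (1:ℝ)|m]) ω ∂μ := h3
      _ = ∫ ω, X ω * X ω ∂μ := by rw [← hX]; rfl
  -- measure facts
  have hμB0 : μ B ≠ 0 := by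
    intro h; rw [hp] at hB0; simp [h] at hB0
  have hμBt : μ B ≠ ⊤ := measure_ne_top μ B
  have hq : (μ Bᶜ).toReal = 1 - p := by
    rw [measure_compl hB hμBt, measure_univ,
      ENNReal.toReal_sub_of_le (prob_le_one) (by simp)]
    simp [hp]
  have hμBc0 : μ Bᶜ ≠ 0 := by
    intro h
    rw [h] at hq
    simp at hq
    linarith
  -- equality of conditional expectations of X
  have key : (μ B).toReal⁻¹ * ∫ ω in B, X ω ∂μ
      = (μ Bᶜ).toReal⁻¹ * ∫ ω in Bᶜ, X ω ∂μ := by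
    have h1 := congrArg (fun ν : Measure ℝ => ∫ x, x ∂ν) hdist
    simp only [ProbabilityTheory.cond, Measure.map_smul, integral_smul_measure,
      ENNReal.toReal_inv, smul_eq_mul] at h1
    rw [integral_map (f := fun x => x) hXmeas.aemeasurable aestronglyMeasurable_id,
      integral_map (f := fun x => x) hXmeas.aemeasurable aestronglyMeasurable_id] at h1
    exact h1
  -- derive ∫ X*X = p^2
  have hBc : ∫ ω in Bᶜ, X ω ∂μ = p - ∫ ω, X ω * X ω ∂μ := by
    have := integral_add_compl hB hXint
    rw [hIX] at this
    rw [← hXB]; linarith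
  have ha : ∫ ω, X ω * X ω ∂μ = p ^ 2 := by
    rw [hXB, hBc, hq] at key
    have hp1 : (0:ℝ) < 1 - p := by linarith
    have hpne : p ≠ 0 := ne_of_gt hB0
    have hqne : (1 - p) ≠ 0 := ne_of_gt hp1
    rw [← hp] at key
    generalize ∫ ω, X ω * X ω ∂μ = a at key ⊢
    field_simp at key
    nlinarith [key]
  -- variance zero
  have hsub : Integrable (fun ω => X ω - p) μ := hXint.sub (integrable_const p)
  have hsq : Integrable (fun ω => (X ω - p) * (X ω - p)) μ := by
    refine hsub.bdd_mul (c := 1 + |p|)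
      ((hXmeas.sub measurable_const).aestronglyMeasurable) ?_
    filter_upwards [hXbd] with ω h
    calc ‖X ω - p‖ ≤ ‖X ω‖ + ‖p‖ := norm_sub_le _ _
      _ ≤ 1 + |p| := by rw [Real.norm_eq_abs (p)]; linarith
  have hintsq : ∫ ω, (X ω - p) * (X ω - p) ∂μ = 0 := by
    have hexp : (fun ω => (X ω - p) * (X ω - p))
        = fun ω => X ω * X ω - (2 * p) * X ω + p ^ 2 := by
      funext ω; ring
    have i3 : Integrable (fun ω => 2 * p * X ω) μ := by
      exact hXint.const_mul (2 * p)
    have i1 : Integrable (fun ω => X ω * X ω - 2 * p * X ω) μ := by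
      exact hXX.sub i3
    rw [hexp, integral_add i1 (integrable_const _),
      integral_sub hXX i3, integral_const_mul, hIX, ha, integral_const]
    simp only [measureReal_def, measure_univ, ENNReal.toReal_one, smul_eq_mul, one_mul]
    ring
  have hz : (fun ω => (X ω - p) * (X ω - p)) =ᵐ[μ] 0 := by
    rw [← integral_eq_zero_iff_of_nonneg_ae
      (Filter.Eventually.of_forall fun ω => mul_self_nonneg _) hsq]
    exact hintsq
  filter_upwards [hz] with ω h
  have : X ω - p = 0 := by
    have := mul_self_eq_zero.mp h
    exact this
  simpa [hp] using sub_eq_zero.mp this
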